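/- Fix β > 0 and let μ be a Borel probability measure on ℝ (the law of a random variable A) with the following max-stability property: for every integer k ≥ 1 and every s ∈ ℝ, μ((−∞, s]) = (μ((−∞, k^β · s]))^k (equivalently, if A₁,…,A_k are i.i.d. with law μ, then k^{−β}·max_{1≤i≤k} A_i again has law μ). Then there exists a real number t ≤ 0 such that μ((−∞, r]) = exp(t · r^{−1/β}) for every r > 0. -/

import Mathlib

open MeasureTheory

/-- Density of `β`-th powers of positive rationals. -/
lemma exists_rat_pow_btwn' (β : ℝ) (hβ : 0 < β) {a b : ℝ} (ha : 0 < a) (hab : a < b) :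
    ∃ m k : ℕ, 1 ≤ m ∧ 1 ≤ k ∧ a < ((m : ℝ) / k) ^ β ∧ ((m : ℝ) / k) ^ β < b := by
  have h1β : 0 < 1 / β := by positivity
  have hb : 0 < b := ha.trans hab
  have hlt : a ^ (1 / β) < b ^ (1 / β) := Real.rpow_lt_rpow ha.le hab h1β
  obtain ⟨q, hq1, hq2⟩ := exists_rat_btwn hlt
  have hapos : (0 : ℝ) < a ^ (1 / β) := Real.rpow_pos_of_pos ha _
  have hqpos : (0 : ℝ) < (q : ℝ) := hapos.trans hq1
  have hqpos' : 0 < q := by exact_mod_cast hqpos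
  refine ⟨q.num.toNat, q.den, ?_, q.pos, ?_, ?_⟩
  · have : 0 < q.num := Rat.num_pos.2 hqpos'
    omega
  · have hcast : ((q.num.toNat : ℝ) / (q.den : ℝ)) = (q : ℝ) := by
      have : 0 < q.num := Rat.num_pos.2 hqpos'
      rw [Rat.cast_def]
      congr 1
      exact_mod_cast Int.toNat_of_nonneg this.le
    rw [hcast]
    calc a = (a ^ (1 / β)) ^ β := by
            rw [← Real.rpow_mul ha.le, one_div, inv_mul_cancel₀ hβ.ne', Real.rpow_one]
      _ < (q : ℝ) ^ β := Real.rpow_lt_rpow hapos.le hq1 hβ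
  · have hcast : ((q.num.toNat : ℝ) / (q.den : ℝ)) = (q : ℝ) := by
      have : 0 < q.num := Rat.num_pos.2 hqpos'
      rw [Rat.cast_def]
      congr 1
      exact_mod_cast Int.toNat_of_nonneg this.le
    rw [hcast]
    calc ((q : ℝ)) ^ β < (b ^ (1 / β)) ^ β := Real.rpow_lt_rpow hqpos.le hq2 hβ
      _ = b := by
            rw [← Real.rpow_mul hb.le, one_div, inv_mul_cancel₀ hβ.ne', Real.rpow_one]

/-- Lemma 2.9 (stability under suprema): a probability law on `ℝ` that is
invariant under taking the maximum of `k` i.i.d. copies rescaled by `k^{-β}`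
has cumulative distribution function `exp (t · r^{-1/β})` on `(0,∞)` for some
`t ≤ 0`. -/
theorem max_stable_law_cdf
    (β : ℝ) (hβ : 0 < β)
    (μ : Measure ℝ) [IsProbabilityMeasure μ]
    (hstab : ∀ k : ℕ, 1 ≤ k → ∀ s : ℝ,
      μ (Set.Iic s) = (μ (Set.Iic ((k : ℝ) ^ β * s))) ^ k) :
    ∃ t : ℝ, t ≤ 0 ∧ ∀ r : ℝ, 0 < r →
      μ (Set.Iic r) = ENNReal.ofReal (Real.exp (t * r ^ (-1 / β))) := by
  classical
  set F : ℝ → ℝ := fun s => (μ (Set.Iic s)).toReal with hFdef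
  have hne : ∀ s : ℝ, μ (Set.Iic s) ≠ ⊤ := fun s => (measure_lt_top μ _).ne
  have hFnn : ∀ s, 0 ≤ F s := fun s => ENNReal.toReal_nonneg
  have hF01 : ∀ s, F s ≤ 1 := by
    intro s
    have h := prob_le_one (μ := μ) (s := Set.Iic s)
    simpa [hFdef] using ENNReal.toReal_mono (by norm_num) h
  have hmono : Monotone F := fun a b hab =>
    ENNReal.toReal_mono (hne b) (measure_mono (Set.Iic_subset_Iic.2 hab))
  have hstab' : ∀ k : ℕ, 1 ≤ k → ∀ s : ℝ, F s = (F ((k : ℝ) ^ β * s)) ^ k := by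
    intro k hk s
    have h := hstab k hk s
    simp only [hFdef]
    rw [h, ENNReal.toReal_pow]
  -- F tends to 1 at infinity
  have htend : Filter.Tendsto F Filter.atTop (nhds 1) := by
    have h1 := tendsto_measure_Iic_atTop (μ := μ)
    have h2 : μ Set.univ = 1 := measure_univ
    rw [h2] at h1
    have h3 := (ENNReal.tendsto_toReal (by norm_num : (1 : ENNReal) ≠ ⊤)).comp h1
    exact h3
  set c : ℝ := F 1 with hc
  have hc1 : c ≤ 1 := hF01 1
  -- c > 0
  have hcpos : 0 < c := by
    rcases lt_or_eq_of_le (hFnn 1) with h | h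
    · exact h
    exfalso
    have hzero : ∀ k : ℕ, 1 ≤ k → F ((k : ℝ) ^ β) = 0 := by
      intro k hk
      have h1 := hstab' k hk 1
      rw [mul_one] at h1
      have : (F ((k : ℝ) ^ β)) ^ k = 0 := by rw [← h1]; exact h.symm
      exact pow_eq_zero_iff (by omega) |>.1 this
    have htend2 : Filter.Tendsto (fun k : ℕ => F ((k : ℝ) ^ β)) Filter.atTop (nhds 1) :=
      htend.comp ((tendsto_rpow_atTop hβ).comp tendsto_natCast_atTop_atTop)
    have htend3 : Filter.Tendsto (fun k : ℕ => F ((k : ℝ) ^ β)) Filter.atTop (nhds 0) := by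
      apply Filter.Tendsto.congr' _ tendsto_const_nhds
      filter_upwards [Filter.eventually_ge_atTop 1] with k hk
      exact (hzero k hk).symm
    exact one_ne_zero (tendsto_nhds_unique htend2 htend3)
  -- value at m^β
  have hroot : ∀ m : ℕ, 1 ≤ m → F ((m : ℝ) ^ β) = c ^ ((m : ℝ)⁻¹) := by
    intro m hm
    have hm0 : (m : ℝ) ≠ 0 := by positivity
    have h1 : c = (F ((m : ℝ) ^ β)) ^ m := by
      have := hstab' m hm 1; rwa [mul_one] at this
    have h2 : c ^ ((m : ℝ)⁻¹) = ((F ((m : ℝ) ^ β)) ^ ((m : ℝ))) ^ ((m : ℝ)⁻¹) := by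
      rw [h1, Real.rpow_natCast]
    rw [← Real.rpow_mul (hFnn _), mul_inv_cancel₀ hm0, Real.rpow_one] at h2
    exact h2.symm
  -- value at (m/k)^β
  have hrat : ∀ m k : ℕ, 1 ≤ m → 1 ≤ k → F (((m : ℝ) / k) ^ β) = c ^ ((k : ℝ) / m) := by
    intro m k hm hk
    have hk0 : (k : ℝ) ≠ 0 := by positivity
    have hmk : (0 : ℝ) ≤ (m : ℝ) / k := by positivity
    have h1 := hstab' k hk (((m : ℝ) / k) ^ β)
    have h2 : (k : ℝ) ^ β * ((m : ℝ) / k) ^ β = (m : ℝ) ^ β := by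
      rw [← Real.mul_rpow (by positivity) hmk, mul_div_cancel₀ _ hk0]
    rw [h2, hroot m hm] at h1
    rw [h1, ← Real.rpow_natCast (c ^ ((m : ℝ)⁻¹)) k, ← Real.rpow_mul hcpos.le]
    congr 1
    field_simp
  set t : ℝ := Real.log c with ht
  have htle : t ≤ 0 := Real.log_nonpos hcpos.le hc1
  refine ⟨t, htle, ?_⟩
  intro r hr
  -- target function
  set g : ℝ → ℝ := fun x => Real.exp (t * x ^ (-1 / β)) with hg
  have hgrat : ∀ m k : ℕ, 1 ≤ m → 1 ≤ k → g (((m : ℝ) / k) ^ β) = F (((m : ℝ) / k) ^ β) := by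
    intro m k hm hk
    have hmk : (0 : ℝ) < (m : ℝ) / k := by positivity
    have hβ0 : β ≠ 0 := hβ.ne'
    have h2 : β * (-1 / β) = -1 := by field_simp
    rw [hg]
    simp only
    rw [← Real.rpow_mul hmk.le, h2, Real.rpow_neg_one, hrat m k hm hk,
      Real.rpow_def_of_pos hcpos]
    congr 1
    rw [inv_div, ht]
  have hgcont : ContinuousAt g r := by
    apply Real.continuous_exp.continuousAt.comp
    exact (continuousAt_const.mul (Real.continuousAt_rpow_const r (-1 / β) (Or.inl hr.ne')))
  -- squeeze
  have hFg : F r = g r := by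
    apply le_antisymm
    · apply le_of_forall_pos_le_add
      intro ε hε
      obtain ⟨δ, hδ, hδε⟩ := Metric.continuousAt_iff.1 hgcont ε hε
      obtain ⟨m, k, hm, hk, hp1, hp2⟩ := exists_rat_pow_btwn' β hβ hr (lt_add_of_pos_right r hδ)
      set p := ((m : ℝ) / k) ^ β
      have hdist : dist p r < δ := by
        rw [Real.dist_eq, abs_of_pos (by linarith)]
        linarith
      have hgp := hδε hdist
      rw [Real.dist_eq] at hgp
      have h1 : F r ≤ F p := hmono hp1.le
      have h2 : F p = g p := (hgrat m k hm hk).symm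
      have := abs_lt.1 hgp
      linarith [this.2]
    · apply le_of_forall_pos_le_add
      intro ε hε
      obtain ⟨δ, hδ, hδε⟩ := Metric.continuousAt_iff.1 hgcont ε hε
      have hlow : 0 < max (r - δ) (r / 2) := lt_max_of_lt_right (by linarith)
      have hlow2 : max (r - δ) (r / 2) < r := max_lt (by linarith) (by linarith)
      obtain ⟨m, k, hm, hk, hp1, hp2⟩ := exists_rat_pow_btwn' β hβ hlow hlow2
      set p := ((m : ℝ) / k) ^ β
      have hpδ : r - δ < p := lt_of_le_of_lt (le_max_left _ _) hp1
      have hdist : dist p r < δ := by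
        rw [Real.dist_eq, abs_of_nonpos (by linarith)]
        linarith
      have hgp := hδε hdist
      rw [Real.dist_eq] at hgp
      have h1 : F p ≤ F r := hmono hp2.le
      have h2 : F p = g p := (hgrat m k hm hk).symm
      have := abs_lt.1 hgp
      linarith [this.1]
  have : μ (Set.Iic r) = ENNReal.ofReal (F r) := (ENNReal.ofReal_toReal (hne r)).symm
  rw [this, hFg]
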